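/- Packing of sparse unit vectors: fix d ∈ ℕ and s ∈ {1,…,d}, and let V := {v ∈ ℝ^d : ‖v‖₂ = 1 and ‖v‖₀ ≤ s}. There exist an integer M with log M ≥ (3s/4)·log(d/(4s)) and vectors v₁,…,v_M ∈ V such that ‖v_j − v_k‖₂ > 1/2 for all distinct j,k ∈ {1,…,M}. -/

import Mathlib

open scoped Classical
open Finset

section AuxPacking

/-- fiber counting -/
lemma pack_fiber_card_le {s m : ℕ} (c : Fin s → Fin m) (D : Finset (Fin s)) :
    (univ.filter fun x : Fin s → Fin m =>
      univ.filter (fun b => x b ≠ c b) = D).card ≤ m ^ D.card := by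
  classical
  have : (univ.filter fun x : Fin s → Fin m =>
      univ.filter (fun b => x b ≠ c b) = D).card ≤
      (univ : Finset (↥D → Fin m)).card := by
    apply Finset.card_le_card_of_injOn (fun x (i : ↥D) => x i.1)
    · intro x _; exact mem_univ _
    · intro x hx y hy hxy
      rw [mem_coe, mem_filter] at hx hy
      replace hx := hx.2; replace hy := hy.2
      funext i
      by_cases hi : i ∈ D
      · exact congrFun hxy ⟨i, hi⟩
      · have hx' : x i = c i := by
          by_contra h
          exact hi (hx ▸ (mem_filter.mpr ⟨mem_univ _, h⟩))
        have hy' : y i = c i := by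
          by_contra h
          exact hi (hy ▸ (mem_filter.mpr ⟨mem_univ _, h⟩))
        rw [hx', hy']
  simpa [Fintype.card_fun] using this

lemma pack_ball_card_le {s m : ℕ} (r : ℕ) (hm : 1 ≤ m) (c : Fin s → Fin m) :
    (univ.filter fun x : Fin s → Fin m =>
      (univ.filter fun b => x b ≠ c b).card ≤ r).card ≤ 2 ^ s * m ^ r := by
  classical
  set P := (univ : Finset (Fin s)).powerset.filter fun D => D.card ≤ r with hP
  have hsub : (univ.filter fun x : Fin s → Fin m =>
      (univ.filter fun b => x b ≠ c b).card ≤ r) ⊆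
      P.biUnion (fun D => univ.filter fun x : Fin s → Fin m =>
        univ.filter (fun b => x b ≠ c b) = D) := by
    intro x hx
    rw [mem_filter] at hx
    apply mem_biUnion.mpr
    refine ⟨univ.filter (fun b => x b ≠ c b), ?_, ?_⟩
    · rw [hP, mem_filter, mem_powerset]; exact ⟨subset_univ _, hx.2⟩
    · rw [mem_filter]; exact ⟨mem_univ _, rfl⟩
  calc (univ.filter fun x : Fin s → Fin m =>
      (univ.filter fun b => x b ≠ c b).card ≤ r).card
      ≤ (P.biUnion (fun D => univ.filter fun x : Fin s → Fin m =>
        univ.filter (fun b => x b ≠ c b) = D)).card := Finset.card_le_card hsub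
    _ ≤ ∑ D ∈ P, (univ.filter fun x : Fin s → Fin m =>
        univ.filter (fun b => x b ≠ c b) = D).card := Finset.card_biUnion_le
    _ ≤ ∑ D ∈ P, m ^ r := by
        apply Finset.sum_le_sum
        intro D hD
        rw [hP, mem_filter] at hD
        exact le_trans (pack_fiber_card_le c D) (Nat.pow_le_pow_right hm hD.2)
    _ = P.card * m ^ r := by rw [Finset.sum_const, smul_eq_mul]
    _ ≤ 2 ^ s * m ^ r := by
        apply Nat.mul_le_mul_right
        calc P.card ≤ (univ : Finset (Fin s)).powerset.card := card_le_card (filter_subset _ _)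
          _ = 2 ^ s := by simp [card_powerset]

/-- Gilbert–Varshamov greedy packing -/
lemma pack_gv (s m r : ℕ) (hm : 1 ≤ m) :
    ∃ F : Finset (Fin s → Fin m),
      (∀ x ∈ F, ∀ y ∈ F, x ≠ y → r < (univ.filter fun b => x b ≠ y b).card) ∧
      m ^ s ≤ F.card * (2 ^ s * m ^ r) := by
  classical
  set good : Finset (Fin s → Fin m) → Prop :=
    fun F => ∀ x ∈ F, ∀ y ∈ F, x ≠ y → r < (univ.filter fun b => x b ≠ y b).card with hgood
  have hne : ((univ : Finset (Finset (Fin s → Fin m))).filter good).Nonempty := by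
    refine ⟨∅, ?_⟩
    rw [mem_filter]
    exact ⟨mem_univ _, fun x hx => absurd hx (notMem_empty x)⟩
  obtain ⟨F, hF, hmax⟩ := Finset.exists_max_image _ Finset.card hne
  rw [mem_filter] at hF
  have hFgood := hF.2
  refine ⟨F, hFgood, ?_⟩
  have hcover : ∀ x : Fin s → Fin m, ∃ c ∈ F,
      (univ.filter fun b => x b ≠ c b).card ≤ r := by
    intro x
    by_cases hxF : x ∈ F
    · exact ⟨x, hxF, by simp⟩
    by_contra h
    push_neg at h
    have hgood' : good (insert x F) := by
      intro a ha b hb hab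
      rcases mem_insert.mp ha with ha' | ha' <;> rcases mem_insert.mp hb with hb' | hb'
      · exact absurd (ha'.trans hb'.symm) hab
      · subst ha'
        have := h b hb'
        omega
      · subst hb'
        have := h a ha'
        have heq : (univ.filter fun bb => a bb ≠ b bb).card
            = (univ.filter fun bb => b bb ≠ a bb).card := by
          congr 1; apply filter_congr; intro i _; simp [ne_comm]
        omega
      · exact hFgood a ha' b hb' hab
    have hle := hmax (insert x F) (mem_filter.mpr ⟨mem_univ _, hgood'⟩)
    rw [Finset.card_insert_of_notMem hxF] at hle
    omega
  have hunion : (univ : Finset (Fin s → Fin m)) ⊆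
      F.biUnion (fun c => univ.filter fun x : Fin s → Fin m =>
        (univ.filter fun b => x b ≠ c b).card ≤ r) := by
    intro x _
    obtain ⟨c, hc, hcd⟩ := hcover x
    exact mem_biUnion.mpr ⟨c, hc, mem_filter.mpr ⟨mem_univ _, hcd⟩⟩
  calc m ^ s = (univ : Finset (Fin s → Fin m)).card := by
        simp [Fintype.card_fun]
    _ ≤ (F.biUnion _).card := card_le_card hunion
    _ ≤ ∑ c ∈ F, (univ.filter fun x : Fin s → Fin m =>
        (univ.filter fun b => x b ≠ c b).card ≤ r).card := card_biUnion_le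
    _ ≤ ∑ c ∈ F, (2 ^ s * m ^ r) := Finset.sum_le_sum fun c _ => pack_ball_card_le r hm c
    _ = F.card * (2 ^ s * m ^ r) := by rw [Finset.sum_const, smul_eq_mul]

/-- embedding of block-coordinate pairs -/
def pemb {d s m : ℕ} (hm : 0 < m) (hsm : s * m ≤ d) (b : Fin s) (k : Fin m) : Fin d :=
  ⟨b.1 * m + k.1, by
    have hb : b.1 + 1 ≤ s := b.2
    calc b.1 * m + k.1 < b.1 * m + m := by omega
      _ = (b.1 + 1) * m := by ring
      _ ≤ s * m := Nat.mul_le_mul_right m hb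
      _ ≤ d := hsm⟩

lemma pemb_inj {d s m : ℕ} (hm : 0 < m) (hsm : s * m ≤ d) :
    ∀ b k b' k', pemb hm hsm b k = pemb hm hsm b' k' → b = b' ∧ k = k' := by
  intro b k b' k' h
  have h' : b.1 * m + k.1 = b'.1 * m + k'.1 := congrArg Fin.val h
  have h2 : m * b.1 + k.1 = m * b'.1 + k'.1 := by
    rw [mul_comm m b.1, mul_comm m b'.1]; exact h'
  have hdiv : (m * b.1 + k.1) / m = b.1 := by
    rw [Nat.mul_add_div hm, Nat.div_eq_of_lt k.2]; omega
  have hdiv' : (m * b'.1 + k'.1) / m = b'.1 := by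
    rw [Nat.mul_add_div hm, Nat.div_eq_of_lt k'.2]; omega
  have hb : b.1 = b'.1 := by rw [← hdiv, ← hdiv', h2]
  refine ⟨Fin.ext hb, Fin.ext ?_⟩
  rw [hb] at h2
  omega

noncomputable def uvec {d s m : ℕ} (hm : 0 < m) (hsm : s * m ≤ d)
    (w : Fin s → Fin m) (i : Fin d) : ℝ :=
  if ∃ b, pemb hm hsm b (w b) = i then (Real.sqrt s)⁻¹ else 0

lemma uvec_emb {d s m : ℕ} (hm : 0 < m) (hsm : s * m ≤ d)
    (w : Fin s → Fin m) (b : Fin s) (k : Fin m) :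
    uvec hm hsm w (pemb hm hsm b k) = if w b = k then (Real.sqrt s)⁻¹ else 0 := by
  unfold uvec
  by_cases h : w b = k
  · rw [if_pos ⟨b, by rw [h]⟩, if_pos h]
  · rw [if_neg h, if_neg]
    rintro ⟨b', hb'⟩
    obtain ⟨hb, hk⟩ := pemb_inj hm hsm b' (w b') b k hb'
    subst hb
    exact h hk

lemma uvec_zero {d s m : ℕ} (hm : 0 < m) (hsm : s * m ≤ d)
    (w : Fin s → Fin m) (i : Fin d)
    (hi : i ∉ Finset.image (fun p : Fin s × Fin m => pemb hm hsm p.1 p.2) univ) :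
    uvec hm hsm w i = 0 := by
  unfold uvec
  rw [if_neg]
  rintro ⟨b, hb⟩
  exact hi (mem_image.mpr ⟨(b, w b), mem_univ _, hb⟩)

lemma pack_sum_pair {d s m : ℕ} (hm : 0 < m) (hsm : s * m ≤ d) (g : Fin d → ℝ)
    (hg : ∀ i, i ∉ Finset.image (fun p : Fin s × Fin m => pemb hm hsm p.1 p.2) univ → g i = 0) :
    ∑ i, g i = ∑ b : Fin s, ∑ k : Fin m, g (pemb hm hsm b k) := by
  rw [← Finset.sum_subset (Finset.subset_univ
    (Finset.image (fun p : Fin s × Fin m => pemb hm hsm p.1 p.2) univ))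
    (fun i _ hi => hg i hi)]
  rw [Finset.sum_image]
  · exact Fintype.sum_prod_type (f := fun p : Fin s × Fin m => g (pemb hm hsm p.1 p.2))
  · intro p _ q _ hpq
    obtain ⟨h1, h2⟩ := pemb_inj hm hsm p.1 p.2 q.1 q.2 hpq
    exact Prod.ext h1 h2

lemma pack_sqrt_inv_sq {s : ℕ} (hs : 0 < s) : ((Real.sqrt s)⁻¹) ^ 2 = (s : ℝ)⁻¹ := by
  rw [← Real.sqrt_inv, Real.sq_sqrt (by positivity)]

lemma uvec_norm {d s m : ℕ} (hm : 0 < m) (hsm : s * m ≤ d) (hs : 0 < s)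
    (w : Fin s → Fin m) :
    ∑ i, (uvec hm hsm w i) ^ 2 = 1 := by
  rw [pack_sum_pair hm hsm _ (fun i hi => by rw [uvec_zero hm hsm w i hi]; ring)]
  have : ∀ b : Fin s, ∑ k : Fin m, (uvec hm hsm w (pemb hm hsm b k)) ^ 2 = (s : ℝ)⁻¹ := by
    intro b
    have hpt : ∀ k : Fin m, (uvec hm hsm w (pemb hm hsm b k)) ^ 2
        = if w b = k then (s : ℝ)⁻¹ else 0 := by
      intro k
      rw [uvec_emb hm hsm]
      by_cases h : w b = k
      · rw [if_pos h, if_pos h, pack_sqrt_inv_sq hs]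
      · rw [if_neg h, if_neg h]; ring
    rw [Finset.sum_congr rfl (fun k _ => hpt k)]
    simp
  rw [Finset.sum_congr rfl (fun b _ => this b)]
  rw [Finset.sum_const, Finset.card_univ, Fintype.card_fin, nsmul_eq_mul]
  field_simp

lemma uvec_support {d s m : ℕ} (hm : 0 < m) (hsm : s * m ≤ d)
    (w : Fin s → Fin m) :
    (univ.filter fun i => uvec hm hsm w i ≠ 0).card ≤ s := by
  classical
  have hsub : (univ.filter fun i => uvec hm hsm w i ≠ 0) ⊆
      Finset.image (fun b : Fin s => pemb hm hsm b (w b)) univ := by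
    intro i hi
    rw [mem_filter] at hi
    unfold uvec at hi
    by_cases h : ∃ b, pemb hm hsm b (w b) = i
    · obtain ⟨b, hb⟩ := h
      exact mem_image.mpr ⟨b, mem_univ _, hb⟩
    · exact absurd (if_neg h) hi.2
  calc (univ.filter fun i => uvec hm hsm w i ≠ 0).card
      ≤ (Finset.image (fun b : Fin s => pemb hm hsm b (w b)) univ).card := card_le_card hsub
    _ ≤ (univ : Finset (Fin s)).card := card_image_le
    _ = s := by simp

lemma uvec_dist {d s m : ℕ} (hm : 0 < m) (hsm : s * m ≤ d) (hs : 0 < s)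
    (w w' : Fin s → Fin m) :
    ∑ i, (uvec hm hsm w i - uvec hm hsm w' i) ^ 2
      = ((univ.filter fun b => w b ≠ w' b).card : ℝ) * (2 / s) := by
  rw [pack_sum_pair hm hsm _ (fun i hi => by
    rw [uvec_zero hm hsm w i hi, uvec_zero hm hsm w' i hi]; ring)]
  have hinner : ∀ b : Fin s, ∑ k : Fin m,
      (uvec hm hsm w (pemb hm hsm b k) - uvec hm hsm w' (pemb hm hsm b k)) ^ 2
      = if w b = w' b then (0:ℝ) else 2 / (s:ℝ) := by
    intro b
    by_cases h : w b = w' b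
    · rw [if_pos h]
      apply Finset.sum_eq_zero
      intro k _
      rw [uvec_emb hm hsm, uvec_emb hm hsm, h]
      ring
    · rw [if_neg h]
      have hpt : ∀ k : Fin m,
          (uvec hm hsm w (pemb hm hsm b k) - uvec hm hsm w' (pemb hm hsm b k)) ^ 2
          = (if w b = k then (s:ℝ)⁻¹ else 0) + (if w' b = k then (s:ℝ)⁻¹ else 0) := by
        intro k
        rw [uvec_emb hm hsm, uvec_emb hm hsm]
        by_cases h1 : w b = k <;> by_cases h2 : w' b = k
        · exact absurd (h1.trans h2.symm) h
        · rw [if_pos h1, if_neg h2, if_pos h1, if_neg h2, sub_zero,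
            pack_sqrt_inv_sq hs, add_zero]
        · rw [if_neg h1, if_pos h2, if_neg h1, if_pos h2, zero_sub, neg_sq,
            pack_sqrt_inv_sq hs, zero_add]
        · rw [if_neg h1, if_neg h2, if_neg h1, if_neg h2]; ring
      rw [Finset.sum_congr rfl (fun k _ => hpt k), Finset.sum_add_distrib]
      rw [Finset.sum_ite_eq (univ : Finset (Fin m)) (w b) (fun _ => (s:ℝ)⁻¹)]
      rw [Finset.sum_ite_eq (univ : Finset (Fin m)) (w' b) (fun _ => (s:ℝ)⁻¹)]
      simp only [mem_univ, if_true]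
      have hs' : (s:ℝ) ≠ 0 := Nat.cast_ne_zero.mpr hs.ne'
      field_simp
      norm_num
  rw [Finset.sum_congr rfl (fun b _ => hinner b)]
  rw [Finset.sum_ite, Finset.sum_const, Finset.sum_const]
  simp

end AuxPacking


lemma pack_log (d s m r M : ℕ) (hd : 0 < d) (hs : 0 < s) (hm4 : 4 ≤ m) (hM : 1 ≤ M)
    (hdm : d < s * m + s) (hr8 : 8 * r ≤ s)
    (hcard : m ^ s ≤ M * (2 ^ s * m ^ r)) :
    (3 * (s : ℝ) / 4) * Real.log ((d : ℝ) / (4 * s)) ≤ Real.log M := by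
  have hsR : (0:ℝ) < s := by positivity
  have hmR : (4:ℝ) ≤ m := by exact_mod_cast hm4
  have hMR : (1:ℝ) ≤ M := by exact_mod_cast hM
  have hdR : (0:ℝ) < d := by positivity
  have hm0 : (0:ℝ) < m := by linarith
  -- Step A
  have hA : (s:ℝ) * Real.log m ≤ Real.log M + s * Real.log 2 + r * Real.log m := by
    have hle : ((m:ℝ)) ^ s ≤ (M:ℝ) * (2 ^ s * m ^ r) := by exact_mod_cast hcard
    have hpos : (0:ℝ) < (m:ℝ) ^ s := by positivity
    have := Real.log_le_log hpos hle
    rw [Real.log_pow, Real.log_mul (by positivity) (by positivity),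
      Real.log_mul (by positivity) (by positivity), Real.log_pow, Real.log_pow] at this
    push_cast at this ⊢
    linarith
  -- Step B
  have hB : Real.log ((d:ℝ) / (4 * s)) ≤ Real.log (5/16) + Real.log m := by
    have harg : (d:ℝ) / (4 * s) ≤ (5/16) * m := by
      rw [div_le_iff₀ (by positivity)]
      have hdm' : (d:ℝ) < s * m + s := by exact_mod_cast hdm
      nlinarith
    have := Real.log_le_log (by positivity) harg
    rwa [Real.log_mul (by norm_num) (by positivity)] at this
  have key : Real.log 2 + (3/4) * Real.log (5/16) ≤ 0 := by
    have h0 : Real.log ((2:ℝ)^4 * (5/16:ℝ)^3) ≤ 0 := Real.log_nonpos (by norm_num) (by norm_num)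
    rw [Real.log_mul (by norm_num) (by norm_num), Real.log_pow, Real.log_pow] at h0
    push_cast at h0
    linarith
  have hLm : 0 ≤ Real.log m := Real.log_nonneg (by linarith)
  have e1 : (3 * (s:ℝ) / 4) * Real.log ((d:ℝ) / (4 * s)) ≤
      (3 * (s:ℝ) / 4) * (Real.log (5/16) + Real.log m) :=
    mul_le_mul_of_nonneg_left hB (by positivity)
  have e2 : (s:ℝ) * (Real.log 2 + (3/4) * Real.log (5/16)) ≤ 0 := by
    have := mul_le_mul_of_nonneg_left key (le_of_lt hsR)
    simpa using this
  have hrs : (r:ℝ) ≤ (s:ℝ) / 8 := by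
    have : (8:ℝ) * r ≤ s := by exact_mod_cast hr8
    linarith
  have e3 : 0 ≤ ((s:ℝ)/4 - r) * Real.log m := mul_nonneg (by linarith) hLm
  nlinarith [e1, e2, e3, hA]


/-- packing of sparse unit vectors. -/
theorem sparse_unit_vector_packing (d s : ℕ) (hd : 0 < d) (hs1 : 1 ≤ s) (hsd : s ≤ d) :
    ∃ (M : ℕ) (v : Fin M → Fin d → ℝ),
      (3 * (s : ℝ) / 4) * Real.log ((d : ℝ) / (4 * s)) ≤ Real.log M ∧
      (∀ j : Fin M, (∑ i, v j i ^ 2) = 1 ∧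
        (Finset.univ.filter fun i => v j i ≠ 0).card ≤ s) ∧
      ∀ j k : Fin M, j ≠ k → 1/2 < Real.sqrt (∑ i, (v j i - v k i) ^ 2) := by
  by_cases hcase : d ≤ 4 * s
  ·
    refine ⟨1, fun _ i => if i = (⟨0, hd⟩ : Fin d) then 1 else 0, ?_, ?_, ?_⟩
    · rw [Nat.cast_one, Real.log_one]
      have hlog : Real.log ((d : ℝ) / (4 * s)) ≤ 0 := by
        apply Real.log_nonpos (by positivity)
        rw [div_le_one (by positivity)]
        exact_mod_cast hcase
      have h1 : (0:ℝ) ≤ 3 * (s:ℝ) / 4 := by positivity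
      nlinarith
    · intro j
      constructor
      · have : ∀ i : Fin d, ((if i = (⟨0, hd⟩ : Fin d) then (1:ℝ) else 0)) ^ 2
            = if i = (⟨0, hd⟩ : Fin d) then (1:ℝ) else 0 := by
          intro i; by_cases h : i = (⟨0, hd⟩ : Fin d) <;> simp [h]
        rw [Finset.sum_congr rfl (fun i _ => this i)]
        simp
      · calc (Finset.univ.filter fun i : Fin d =>
            (if i = (⟨0, hd⟩ : Fin d) then (1:ℝ) else 0) ≠ 0).card
            ≤ ({⟨0, hd⟩} : Finset (Fin d)).card := by
              apply card_le_card
              intro i hi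
              rw [mem_filter] at hi
              rw [mem_singleton]
              by_contra h
              exact hi.2 (if_neg h)
          _ = 1 := card_singleton _
          _ ≤ s := hs1
    · intro j k hjk
      exact absurd (Subsingleton.elim j k) hjk
  · push_neg at hcase

    have hs : 0 < s := hs1
    set m := d / s with hmdef
    have hm4 : 4 ≤ m := (Nat.le_div_iff_mul_le hs).mpr (by omega)
    have hm : 0 < m := by omega
    have hsm : s * m ≤ d := by
      rw [hmdef, mul_comm]
      exact Nat.div_mul_le_self d s
    have hdm : d < s * m + s := by
      have h1 : s * m + d % s = d := by
        rw [hmdef]; exact Nat.div_add_mod d s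
      have h2 := Nat.mod_lt d hs
      omega
    set r := s / 8 with hrdef
    have hr8 : 8 * r ≤ s := by omega
    obtain ⟨F, hFgood, hFcard⟩ := pack_gv s m r (by omega)
    set M := F.card with hMdef
    have hM1 : 1 ≤ M := by
      by_contra h
      have : M = 0 := by omega
      rw [this, zero_mul] at hFcard
      have : 0 < m ^ s := Nat.pow_pos hm
      omega
    set wc : Fin M → (Fin s → Fin m) := fun j => (F.equivFin.symm j : _) with hwc
    refine ⟨M, fun j => uvec hm hsm (wc j), ?_, ?_, ?_⟩
    · exact pack_log d s m r M hd hs hm4 hM1 hdm hr8 hFcard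
    · intro j
      exact ⟨uvec_norm hm hsm hs (wc j), uvec_support hm hsm (wc j)⟩
    · intro j k hjk
      have hne : wc j ≠ wc k := by
        intro h
        apply hjk
        have := F.equivFin.symm.injective (Subtype.ext h)
        exact this
      have hmemj : wc j ∈ F := (F.equivFin.symm j).2
      have hmemk : wc k ∈ F := (F.equivFin.symm k).2
      have hdist := hFgood _ hmemj _ hmemk hne
      rw [uvec_dist hm hsm hs]
      set hcard := (univ.filter fun b => wc j b ≠ wc k b).card with hcdef
      have h8 : s < 8 * hcard := by omega
      rw [show (1:ℝ)/2 = 2⁻¹ by norm_num]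
      rw [show ((hcard:ℝ)) * (2 / s) = (2 * hcard) / s by ring]
      rw [Real.lt_sqrt (by norm_num)]
      rw [lt_div_iff₀ (by positivity : (0:ℝ) < (s:ℝ))]
      have h8R : (s:ℝ) < 8 * hcard := by exact_mod_cast h8
      nlinarith
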